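/- Let β > 0 and let G = (V,E) be a graph on n vertices such that every separator in G has size at least βn. Then G contains an induced subgraph on at least 2n/3 vertices which is a (3β/2)-expander. -/
import Mathlib


open scoped Classical

/-- The external neighborhood of a vertex set `U` in a simple graph `G`:
all vertices outside `U` having a neighbor in `U`. -/
def SimpleGraph.extNb {V : Type*} (G : SimpleGraph V) (U : Set V) : Set V :=
  {v | v ∉ U ∧ ∃ u ∈ U, G.Adj u v}

/-- A graph `G` on `n` vertices is an `α`-expander if every vertex subset `U` with
`|U| ≤ n/2` satisfies `|N_G(U)| ≥ α |U|`. -/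
def SimpleGraph.IsExpander {V : Type*} [Fintype V] (G : SimpleGraph V) (α : ℝ) : Prop :=
  ∀ U : Set V, (U.ncard : ℝ) ≤ (Fintype.card V : ℝ) / 2 →
    α * U.ncard ≤ ((G.extNb U).ncard : ℝ)

/-- `G` is a `(k, α)`-expander if every vertex subset `U` with `|U| ≤ k`
satisfies `|N_G(U)| ≥ α |U|`. -/
def SimpleGraph.IsKExpander {V : Type*} (G : SimpleGraph V) (k α : ℝ) : Prop :=
  ∀ U : Set V, (U.ncard : ℝ) ≤ k → α * U.ncard ≤ ((G.extNb U).ncard : ℝ)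

/-- A vertex set `S` is a separator in `G` if the vertex set can be partitioned as
`V = A ∪ B ∪ S` with `|A|, |B| ≤ 2n/3` and no edges between `A` and `B`. -/
def SimpleGraph.IsSeparator {V : Type*} [Fintype V] (G : SimpleGraph V) (S : Set V) : Prop :=
  ∃ A B : Set V, A ∪ B ∪ S = Set.univ ∧
    Disjoint A B ∧ Disjoint A S ∧ Disjoint B S ∧
    (A.ncard : ℝ) ≤ 2 * (Fintype.card V : ℝ) / 3 ∧
    (B.ncard : ℝ) ≤ 2 * (Fintype.card V : ℝ) / 3 ∧
    ∀ a ∈ A, ∀ b ∈ B, ¬ G.Adj a b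

-- bridge lemma
lemma bridge {V : Type*} [Fintype V] (G : SimpleGraph V) (α : ℝ) (W : Set V)
    (hexp : ∀ U : Set V, U ⊆ W → (U.ncard : ℝ) ≤ (W.ncard : ℝ) / 2 →
      α * U.ncard ≤ (((G.extNb U) ∩ W).ncard : ℝ)) :
    (G.induce W).IsExpander α := by
  intro U' hU'
  have hcard : (Fintype.card ↥W : ℕ) = W.ncard := by
    rw [← Nat.card_coe_set_eq, Nat.card_eq_fintype_card]
  set U : Set V := (↑) '' U' with hU
  have hUsub : U ⊆ W := Subtype.coe_image_subset W U'
  have hUncard : U.ncard = U'.ncard := Set.ncard_image_of_injective _ Subtype.val_injective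
  have himg : (↑) '' ((G.induce W).extNb U') = (G.extNb U) ∩ W := by
    ext v
    constructor
    · rintro ⟨v', ⟨hv'U, u', hu'U, hadj⟩, rfl⟩
      refine ⟨⟨?_, ⟨u', ⟨u', hu'U, rfl⟩, ?_⟩⟩, v'.2⟩
      · rintro ⟨x, hxU, hx⟩
        exact hv'U (Subtype.val_injective hx ▸ hxU)
      · exact hadj
    · rintro ⟨⟨hvU, u, ⟨u', hu'U, rfl⟩, hadj⟩, hvW⟩
      refine ⟨⟨v, hvW⟩, ⟨?_, u', hu'U, hadj⟩, rfl⟩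
      intro hmem
      exact hvU ⟨⟨v, hvW⟩, hmem, rfl⟩
  have himgcard : ((G.induce W).extNb U').ncard = ((G.extNb U) ∩ W).ncard := by
    rw [← himg, Set.ncard_image_of_injective _ Subtype.val_injective]
  rw [himgcard]
  rw [← hUncard]
  apply hexp U hUsub
  rw [hUncard]
  calc (U'.ncard : ℝ) ≤ (Fintype.card ↥W : ℝ) / 2 := hU'
    _ = (W.ncard : ℝ) / 2 := by rw [hcard]

lemma aux {V : Type*} [Fintype V] (G : SimpleGraph V) (β : ℝ) (hβ : 0 < β)
    (h : ∀ S : Set V, G.IsSeparator S → β * (Fintype.card V : ℝ) ≤ (S.ncard : ℝ)) :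
    ∀ m : ℕ, ∀ W : Set V, W.ncard ≤ m →
      ((Wᶜ.ncard : ℝ) < (Fintype.card V : ℝ) / 3) →
      ((G.extNb Wᶜ).ncard : ℝ) ≤ 3 * β / 2 * Wᶜ.ncard →
      ∃ W' : Set V, 2 * (Fintype.card V : ℝ) / 3 ≤ (W'.ncard : ℝ) ∧
        ∀ U : Set V, U ⊆ W' → (U.ncard : ℝ) ≤ (W'.ncard : ℝ) / 2 →
          3 * β / 2 * U.ncard ≤ (((G.extNb U) ∩ W').ncard : ℝ) := by
  intro m
  induction m with
  | zero =>
    intro W hW hlt _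
    exfalso
    have h1 : W = ∅ := by
      have := Set.ncard_eq_zero (Set.toFinite W) |>.mp (Nat.le_zero.mp hW)
      exact this
    rw [h1, Set.compl_empty, Set.ncard_univ, Nat.card_eq_fintype_card] at hlt
    have : (0:ℝ) ≤ (Fintype.card V : ℝ) := Nat.cast_nonneg _
    linarith
  | succ m ih =>
    intro W hW hlt hI
    set n : ℝ := (Fintype.card V : ℝ) with hn
    by_cases hexp : ∀ U : Set V, U ⊆ W → (U.ncard : ℝ) ≤ (W.ncard : ℝ) / 2 →
        3 * β / 2 * U.ncard ≤ (((G.extNb U) ∩ W).ncard : ℝ)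
    · refine ⟨W, ?_, hexp⟩
      have hsum : (W.ncard : ℝ) + (Wᶜ.ncard : ℝ) = n := by
        rw [hn, ← Nat.cast_add, Set.ncard_add_ncard_compl, Nat.card_eq_fintype_card]
      linarith
    · push_neg at hexp
      obtain ⟨U, hUW, hUhalf, hUbad⟩ := hexp
      -- U is nonempty
      have hUpos : 1 ≤ U.ncard := by
        by_contra hc
        push_neg at hc
        have : U.ncard = 0 := by omega
        rw [this] at hUbad
        simp at hUbad
        have : (0:ℝ) ≤ ((G.extNb U ∩ W).ncard : ℝ) := Nat.cast_nonneg _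
        linarith
      set W2 : Set V := W \ U with hW2
      have hcomp : W2ᶜ = Wᶜ ∪ U := by
        rw [hW2, Set.diff_eq, Set.compl_inter, compl_compl]
      have hdisj : Disjoint Wᶜ U := by
        rw [Set.disjoint_right]
        intro a haU
        simp only [Set.mem_compl_iff, not_not]
        exact hUW haU
      have hcompcard : W2ᶜ.ncard = Wᶜ.ncard + U.ncard := by
        rw [hcomp, Set.ncard_union_eq hdisj (Set.toFinite _) (Set.toFinite _)]
      -- neighborhood inclusion
      have hnbsub : G.extNb W2ᶜ ⊆ G.extNb Wᶜ ∪ ((G.extNb U) ∩ W) := by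
        rw [hcomp]
        rintro v ⟨hvnot, u, humem, hadj⟩
        rw [Set.mem_union] at humem
        rw [Set.mem_union] at hvnot ⊢
        push_neg at hvnot
        rcases humem with hu | hu
        · exact Or.inl ⟨hvnot.1, u, hu, hadj⟩
        · refine Or.inr ⟨⟨hvnot.2, u, hu, hadj⟩, ?_⟩
          by_contra hvW
          exact hvnot.1 hvW
      have hnbcard : ((G.extNb W2ᶜ).ncard : ℝ) ≤ 3 * β / 2 * W2ᶜ.ncard := by
        have h1 : (G.extNb W2ᶜ).ncard ≤ (G.extNb Wᶜ).ncard + ((G.extNb U) ∩ W).ncard := by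
          calc (G.extNb W2ᶜ).ncard ≤ (G.extNb Wᶜ ∪ ((G.extNb U) ∩ W)).ncard :=
                Set.ncard_le_ncard hnbsub (Set.toFinite _)
            _ ≤ _ := Set.ncard_union_le _ _
        calc ((G.extNb W2ᶜ).ncard : ℝ) ≤ ((G.extNb Wᶜ).ncard : ℝ) + (((G.extNb U) ∩ W).ncard : ℝ) := by
              exact_mod_cast h1
          _ ≤ 3 * β / 2 * Wᶜ.ncard + 3 * β / 2 * U.ncard := by linarith [le_of_lt hUbad]
          _ = 3 * β / 2 * (Wᶜ.ncard + U.ncard) := by ring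
          _ = 3 * β / 2 * W2ᶜ.ncard := by rw [hcompcard]; push_cast; ring
      have hsum : (W.ncard : ℝ) + (Wᶜ.ncard : ℝ) = n := by
        rw [hn, ← Nat.cast_add, Set.ncard_add_ncard_compl, Nat.card_eq_fintype_card]
      have hW2card : W2.ncard = W.ncard - U.ncard := Set.ncard_diff hUW (Set.toFinite _)
      by_cases hsmall : (W2ᶜ.ncard : ℝ) < n / 3
      · -- recurse
        apply ih W2 _ hsmall hnbcard
        have hWle : U.ncard ≤ W.ncard := Set.ncard_le_ncard hUW (Set.toFinite _)
        omega
      · -- build separator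
        exfalso
        push_neg at hsmall
        set D : Set V := W2ᶜ with hD
        set S : Set V := G.extNb D with hS
        have hDlt : (D.ncard : ℝ) < 2 * n / 3 := by
          have : (D.ncard : ℝ) = (Wᶜ.ncard : ℝ) + (U.ncard : ℝ) := by
            rw [hD, hcompcard]; push_cast; ring
          -- |U| ≤ |W|/2 = (n - |Wᶜ|)/2
          have hWc0 : (0:ℝ) ≤ (Wᶜ.ncard : ℝ) := Nat.cast_nonneg _
          linarith [hUhalf, hlt, hsum]
        have hsep : G.IsSeparator S := by
          refine ⟨D, (D ∪ S)ᶜ, ?_, ?_, ?_, ?_, ?_, ?_, ?_⟩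
          · rw [Set.union_right_comm, Set.union_compl_self]
          · rw [Set.disjoint_right]
            intro a ha
            simp only [Set.mem_compl_iff, Set.mem_union] at ha
            push_neg at ha
            exact fun hc => (ha.1 hc).elim  -- a ∈ D contradicts ha.1
          · rw [Set.disjoint_right]
            rintro a ⟨haD, _⟩
            exact haD
          · rw [Set.disjoint_left]
            intro a ha
            simp only [Set.mem_compl_iff, Set.mem_union] at ha
            push_neg at ha
            exact ha.2
          · exact le_of_lt hDlt
          · have h1 : ((D ∪ S)ᶜ).ncard ≤ Dᶜ.ncard := by
              apply Set.ncard_le_ncard _ (Set.toFinite _)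
              exact Set.compl_subset_compl.mpr Set.subset_union_left
            have h2 : (Dᶜ.ncard : ℝ) = n - D.ncard := by
              have : (D.ncard : ℝ) + (Dᶜ.ncard : ℝ) = n := by
                rw [hn, ← Nat.cast_add, Set.ncard_add_ncard_compl, Nat.card_eq_fintype_card]
              linarith
            calc (((D ∪ S)ᶜ).ncard : ℝ) ≤ (Dᶜ.ncard : ℝ) := by exact_mod_cast h1
              _ = n - D.ncard := h2
              _ ≤ 2 * n / 3 := by linarith [hsmall]
          · intro a haD b hb hadj
            simp only [Set.mem_compl_iff, Set.mem_union] at hb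
            push_neg at hb
            exact hb.2 ⟨hb.1, a, haD, hadj⟩
        have := h S hsep
        have hScard : ((S.ncard : ℝ)) ≤ 3 * β / 2 * D.ncard := hnbcard
        have h2 : 3 * β / 2 * (D.ncard:ℝ) < 3 * β / 2 * (2 * n / 3) := by
          apply mul_lt_mul_of_pos_left hDlt; linarith
        have h3 : 3 * β / 2 * (2 * n / 3) = β * n := by ring
        linarith
theorem stmt_8 {V : Type*} [Fintype V] (G : SimpleGraph V) (β : ℝ) (hβ : 0 < β)
    (h : ∀ S : Set V, G.IsSeparator S → β * (Fintype.card V : ℝ) ≤ (S.ncard : ℝ)) :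
    ∃ W : Set V, 2 * (Fintype.card V : ℝ) / 3 ≤ (W.ncard : ℝ) ∧
      (G.induce W).IsExpander (3 * β / 2) := by
  by_cases hn : Fintype.card V = 0
  · refine ⟨Set.univ, by rw [hn]; simp, ?_⟩
    intro U hU
    have : IsEmpty V := Fintype.card_eq_zero_iff.mp hn
    have hU0 : U.ncard = 0 := by
      have : U = ∅ := Set.eq_empty_of_isEmpty _
      rw [this, Set.ncard_empty]
    rw [hU0]
    simp
  · have hn0 : (0:ℝ) < (Fintype.card V : ℝ) := by
      exact_mod_cast Nat.pos_of_ne_zero hn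
    have hempt : G.extNb (∅ : Set V) = ∅ := by
      ext v; simp [SimpleGraph.extNb]
    obtain ⟨W', hW'card, hW'exp⟩ := aux G β hβ h (Fintype.card V) Set.univ
      (by rw [Set.ncard_univ, Nat.card_eq_fintype_card])
      (by rw [Set.compl_univ, Set.ncard_empty]; push_cast; linarith)
      (by rw [Set.compl_univ, hempt, Set.ncard_empty]; simp)
    exact ⟨W', hW'card, bridge G _ W' hW'exp⟩
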